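/- Let 𝔤 be the 4-dimensional Lie algebra normal form with orthonormal basis {X,Y,Z,W} and brackets [W,Z]=λW, [Z,X]=αX+βY+z₁Z+w₁W, [Z,Y]=−βX+αY+z₂Z+w₂W, [W,X]=aX+bY+z₃Z−z₁W, [W,Y]=−bX+aY+z₄Z−z₂W, [Y,X]=rX+θ₁Z+θ₂W, and J with JX=Y, JY=−X, JZ=W, JW=−Z. Define ∇ by the Koszul formula and ω(U,V)=g(JU,V). Then ∇ω = 0 if and only if θ₁ = 2a, θ₂ = −2α, 2z₂ + z₃ + w₁ = 0 and 2z₁ − z₄ − w₂ = 0. -/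

import Mathlib

set_option maxHeartbeats 4000000 in


/-- For the 4-dimensional Lie algebra normal form with orthonormal basis
`{X,Y,Z,W}`, bracket relations as listed, `J` with `JX=Y, JY=−X, JZ=W, JW=−Z`,
Levi-Civita connection `∇` given by the Koszul formula and Kähler form `ω(U,V)=g(JU,V)`
with `∇_U(ω)(V,T) = g(∇_U V, JT) − g(JV, ∇_U T)`, one has `∇ω = 0` iff
`θ₁ = 2a`, `θ₂ = −2α`, `2z₂+z₃+w₁ = 0` and `2z₁−z₄−w₂ = 0`. -/
theorem kaehler_condition
    {V : Type*} [NormedAddCommGroup V] [InnerProductSpace ℝ V] [FiniteDimensional ℝ V]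
    (e : OrthonormalBasis (Fin 4) ℝ V)
    (X Y Z W : V) (hX : X = e 0) (hY : Y = e 1) (hZ : Z = e 2) (hW : W = e 3)
    (lam alpha beta a b r z1 z2 z3 z4 w1 w2 th1 th2 : ℝ)
    (lb : V →ₗ[ℝ] V →ₗ[ℝ] V)
    (hskew : ∀ U U' : V, lb U U' = - lb U' U)
    (hWZ : lb W Z = lam • W)
    (hZX : lb Z X = alpha • X + beta • Y + z1 • Z + w1 • W)
    (hZY : lb Z Y = -beta • X + alpha • Y + z2 • Z + w2 • W)
    (hWX : lb W X = a • X + b • Y + z3 • Z + (-z1) • W)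
    (hWY : lb W Y = -b • X + a • Y + z4 • Z + (-z2) • W)
    (hYX : lb Y X = r • X + th1 • Z + th2 • W)
    (J : V →ₗ[ℝ] V)
    (hJX : J X = Y) (hJY : J Y = -X) (hJZ : J Z = W) (hJW : J W = -Z)
    (nabla : V → V → V)
    (hKoszul : ∀ U U' T : V, 2 * (inner ℝ (nabla U U') T : ℝ) =
      (inner ℝ T (lb U U') : ℝ) + inner ℝ (lb T U) U' + inner ℝ U (lb T U'))
    (nablaOmega : V → V → V → ℝ)
    (hnablaOmega : ∀ U U' T : V, nablaOmega U U' T =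
      (inner ℝ (nabla U U') (J T) : ℝ) - inner ℝ (J U') (nabla U T)) :
    (∀ U U' T : V, nablaOmega U U' T = 0) ↔
      (th1 = 2 * a ∧ th2 = -2 * alpha ∧
        2 * z2 + z3 + w1 = 0 ∧ 2 * z1 - z4 - w2 = 0) := by
  subst hX hY hZ hW
  have horth : ∀ i j : Fin 4, (inner ℝ (e i) (e j) : ℝ) = if i = j then 1 else 0 :=
    orthonormal_iff_ite.mp e.orthonormal
  have hself : ∀ u : V, lb u u = 0 := by
    intro u
    have h : lb u u + lb u u = 0 := by nth_rewrite 1 [hskew u u]; exact neg_add_cancel _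
    have h2 : (2 : ℝ) • lb u u = 0 := by rw [two_smul]; exact h
    rcases smul_eq_zero.mp h2 with h' | h'
    · norm_num at h'
    · exact h'
  have h23 : lb (e 2) (e 3) = -(lam • e 3) := by rw [hskew, hWZ]
  have h02 : lb (e 0) (e 2) =
      -(alpha • e 0 + beta • e 1 + z1 • e 2 + w1 • e 3) := by rw [hskew, hZX]
  have h12 : lb (e 1) (e 2) =
      -(-beta • e 0 + alpha • e 1 + z2 • e 2 + w2 • e 3) := by rw [hskew, hZY]
  have h03 : lb (e 0) (e 3) =
      -(a • e 0 + b • e 1 + z3 • e 2 + (-z1) • e 3) := by rw [hskew, hWX]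
  have h13 : lb (e 1) (e 3) =
      -(-b • e 0 + a • e 1 + z4 • e 2 + (-z2) • e 3) := by rw [hskew, hWY]
  have h01 : lb (e 0) (e 1) = -(r • e 0 + th1 • e 2 + th2 • e 3) := by rw [hskew, hYX]
  have key : ∀ U U' T : V, 2 * nablaOmega U U' T =
      ((inner ℝ (J T) (lb U U') : ℝ) + inner ℝ (lb (J T) U) U' + inner ℝ U (lb (J T) U'))
      - ((inner ℝ (J U') (lb U T) : ℝ) + inner ℝ (lb (J U') U) T + inner ℝ U (lb (J U') T)) := by
    intro U U' T
    rw [hnablaOmega, mul_sub, hKoszul U U' (J T), real_inner_comm (nabla U T) (J U'),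
      hKoszul U T (J U')]
  constructor
  · intro h
    have k1 := key (e 0) (e 0) (e 2)
    have k2 := key (e 0) (e 0) (e 3)
    have k3 := key (e 2) (e 0) (e 2)
    have k4 := key (e 2) (e 0) (e 3)
    simp only [h, hJX, hJY, hJZ, hJW, hself, h23, h02, h12, h03, h13, h01, hWZ, hZX, hZY,
      hWX, hWY, hYX, map_neg, map_smul, LinearMap.neg_apply, LinearMap.smul_apply,
      inner_add_left, inner_add_right, inner_neg_left, inner_neg_right,
      real_inner_smul_left, real_inner_smul_right, inner_zero_left, inner_zero_right,
      horth, mul_zero] at k1 k2 k3 k4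
    simp only [Fin.reduceEq, reduceIte] at k1 k2 k3 k4
    norm_num at k1 k2 k3 k4
    refine ⟨by linarith, by linarith, by linarith, by linarith⟩
  · rintro ⟨h1, h2, h3, h4⟩ U U' T
    subst h1 h2
    have hw1 : w1 = -(2 * z2) - z3 := by linarith
    have hw2 : w2 = 2 * z1 - z4 := by linarith
    subst hw1 hw2
    have hk := key U U' T
    obtain ⟨cu, hcu⟩ : ∃ c : Fin 4 → ℝ, U = ∑ i, c i • e i :=
      ⟨e.repr U, (e.sum_repr U).symm⟩
    obtain ⟨cv, hcv⟩ : ∃ c : Fin 4 → ℝ, U' = ∑ i, c i • e i :=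
      ⟨e.repr U', (e.sum_repr U').symm⟩
    obtain ⟨ct, hct⟩ : ∃ c : Fin 4 → ℝ, T = ∑ i, c i • e i :=
      ⟨e.repr T, (e.sum_repr T).symm⟩
    subst hcu hcv hct
    have hz : (2 : ℝ) * nablaOmega (∑ i, cu i • e i) (∑ i, cv i • e i) (∑ i, ct i • e i) = 0 := by
      rw [hk]
      repeat' simp only [map_sum, map_add, map_smul, LinearMap.sum_apply, LinearMap.add_apply, LinearMap.smul_apply, map_neg, LinearMap.neg_apply,
        Fin.sum_univ_four, hJX, hJY, hJZ, hJW, hself, h23, h02, h12, h03, h13, h01,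
        hWZ, hZX, hZY, hWX, hWY, hYX,
        smul_add, smul_neg, smul_smul, smul_zero, neg_add_rev,
        inner_add_left, inner_add_right, inner_neg_left, inner_neg_right,
        real_inner_smul_left, real_inner_smul_right, inner_zero_left, inner_zero_right,
        horth]
      simp only [Fin.reduceEq, reduceIte]
      norm_num
      ring
    linarith
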